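/- Differential privacy of the monotonic-valuations mechanism (used in the proof of Theorem 4.2). Fix B > 0, ε > 0 and n ≥ 1, and let M_{B,ε} be the monotonic-valuations mechanism. Then for every player i, M_{-i} is ε-differentially private for i-neighbors: for all i-neighbors (b,v),(b',v') and every outcome (s, p_{-i}) ∈ ℤ × ℝ^{n-1}, Pr[M_{-i}(b,v) = (s,p_{-i})] ≤ e^ε · Pr[M_{-i}(b',v') = (s,p_{-i})]. -/

import Mathlib

open MeasureTheory
open scoped ENNReal

noncomputable section

attribute [local instance] Classical.propDecidable

/-- Expectation of a real-valued function under a `PMF`. -/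
def PMF.expect {α : Type*} [MeasurableSpace α] (p : PMF α) (f : α → ℝ) : ℝ :=
  ∫ x, f x ∂p.toMeasure

/-- Total variation (statistical) distance between two distributions:
`Δ(p,q) = sup_S |p(S) - q(S)|`. -/
def tvDist {α : Type*} (p q : PMF α) : ℝ :=
  ⨆ S : Set α, |(p.toOuterMeasure S).toReal - (q.toOuterMeasure S).toReal|

/-- A mechanism on `n` players: a randomized function producing an integer output
(an estimate of the sum of the data bits) together with payments to the `n` players. -/
structure Mech (n : ℕ) where
  run : (Fin n → Bool) → (Fin n → ℝ) → PMF (ℤ × (Fin n → ℝ))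

namespace Mech

variable {n : ℕ}

/-- The output part `M_out`. -/
def out (M : Mech n) (b : Fin n → Bool) (v : Fin n → ℝ) : PMF ℤ :=
  (M.run b v).map Prod.fst

/-- The payment part `M_pay`. -/
def payPMF (M : Mech n) (b : Fin n → Bool) (v : Fin n → ℝ) : PMF (Fin n → ℝ) :=
  (M.run b v).map Prod.snd

/-- `Pay_i(b,v)`: the expected payment to player `i`. -/
def pay (M : Mech n) (b : Fin n → Bool) (v : Fin n → ℝ) (i : Fin n) : ℝ :=
  (M.payPMF b v).expect (fun p => p i)

/-- `M_{-i}`: the output together with the payments to all players other than `i`. -/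
def minus (M : Mech n) (i : Fin n) (b : Fin n → Bool) (v : Fin n → ℝ) :
    PMF (ℤ × ({j : Fin n // j ≠ i} → ℝ)) :=
  (M.run b v).map (fun sp => (sp.1, fun j => sp.2 j.1))

end Mech

/-- The type of privacy loss functions `λ_i(b, v, v'_i, s, p_{-i})` for player `i`. -/
abbrev LossFn (n : ℕ) (i : Fin n) : Type :=
  (Fin n → Bool) → (Fin n → ℝ) → ℝ → ℤ → ({j : Fin n // j ≠ i} → ℝ) → ℝ

/-- `Loss_i(b, v, v'_i)`: the expected privacy loss of player `i` with true types `(b,v)`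
and declaration `v'_i`. -/
def lossOf {n : ℕ} (M : Mech n) {i : Fin n} (lam : LossFn n i)
    (b : Fin n → Bool) (v : Fin n → ℝ) (v'i : ℝ) : ℝ :=
  (M.run b (Function.update v i v'i)).expect
    (fun sp => lam b v v'i sp.1 (fun j => sp.2 j.1))

/-- `i`-neighbors: inputs agreeing in all coordinates `j ≠ i`. -/
def iNeighbor {n : ℕ} (i : Fin n) (x y : (Fin n → Bool) × (Fin n → ℝ)) : Prop :=
  ∀ j, j ≠ i → x.1 j = y.1 j ∧ x.2 j = y.2 j

/-- Neighbors: `i`-neighbors for some `i`. -/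
def Neighbor {n : ℕ} (x y : (Fin n → Bool) × (Fin n → ℝ)) : Prop :=
  ∃ i, iNeighbor i x y

/-- Monotonically related player types. -/
def monRelated (t t' : Bool × ℝ) : Prop :=
  (t.1 = false ∧ t'.1 = true ∧ t.2 ≤ t'.2) ∨ (t.1 = true ∧ t'.1 = false ∧ t'.2 ≤ t.2)

/-- Monotonic `i`-neighbors. -/
def monINeighbor {n : ℕ} (i : Fin n) (x y : (Fin n → Bool) × (Fin n → ℝ)) : Prop :=
  iNeighbor i x y ∧ monRelated (x.1 i, x.2 i) (y.1 i, y.2 i)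

/-- `(b,v)` is `δ`-distinguishable for player `i` with respect to `f`. -/
def distinguishable {n : ℕ} {α : Type*} (δ : ℝ)
    (f : (Fin n → Bool) → (Fin n → ℝ) → PMF α) (i : Fin n)
    (b : Fin n → Bool) (v : Fin n → ℝ) : Prop :=
  ∃ y : (Fin n → Bool) × (Fin n → ℝ), iNeighbor i (b, v) y ∧ δ ≤ tvDist (f b v) (f y.1 y.2)

/-- `(b,v)` is `δ`-monotonically distinguishable for player `i` with respect to `f`. -/
def monDistinguishable {n : ℕ} {α : Type*} (δ : ℝ)
    (f : (Fin n → Bool) → (Fin n → ℝ) → PMF α) (i : Fin n)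
    (b : Fin n → Bool) (v : Fin n → ℝ) : Prop :=
  ∃ y : (Fin n → Bool) × (Fin n → ℝ), monINeighbor i (b, v) y ∧ δ ≤ tvDist (f b v) (f y.1 y.2)

/-- `λ_i` respects indifference. -/
def respectsIndifference {n : ℕ} (M : Mech n) {i : Fin n} (lam : LossFn n i) : Prop :=
  ∀ b v, v i = 0 → ∀ v' v'', lossOf M lam b v v' = lossOf M lam b v v''

/-- `λ_i` is increasing for `δ`-distinguishability. -/
def increasingFor {n : ℕ} (M : Mech n) {i : Fin n} (lam : LossFn n i) (δ : ℝ) : Prop :=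
  ∃ T : ℝ → (Fin n → Bool) → ({j : Fin n // j ≠ i} → ℝ) → ℝ,
    ∀ ℓ, 0 < ℓ → ∀ (b : Fin n → Bool) (v : Fin n → ℝ),
      T ℓ b (fun j => v j.1) ≤ v i →
      distinguishable δ M.out i b v →
      ℓ < lossOf M lam b v (v i)

/-- `λ_i` is increasing for `δ`-monotonic distinguishability. -/
def increasingForMon {n : ℕ} (M : Mech n) {i : Fin n} (lam : LossFn n i) (δ : ℝ) : Prop :=
  ∃ T : ℝ → (Fin n → Bool) → ({j : Fin n // j ≠ i} → ℝ) → ℝ,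
    ∀ ℓ, 0 < ℓ → ∀ (b : Fin n → Bool) (v : Fin n → ℝ),
      T ℓ b (fun j => v j.1) ≤ v i →
      monDistinguishable δ M.out i b v →
      ℓ < lossOf M lam b v (v i)

/-- `M` is individually rational. -/
def indivRational {n : ℕ} (M : Mech n) (lam : ∀ i : Fin n, LossFn n i) : Prop :=
  ∀ b v i, lossOf M (lam i) b v (v i) ≤ M.pay b v i

/-- `M` is truthful for input `(b,v)` and player `i`. -/
def truthfulAt {n : ℕ} (M : Mech n) {i : Fin n} (lam : LossFn n i)
    (b : Fin n → Bool) (v : Fin n → ℝ) : Prop :=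
  ∀ v'i : ℝ,
    M.pay b (Function.update v i v'i) i - lossOf M lam b v v'i ≤
      M.pay b v i - lossOf M lam b v (v i)

/-- The average `b̄` of the data bits. -/
def bbar {n : ℕ} (b : Fin n → Bool) : ℝ := (∑ i, if b i then (1 : ℝ) else 0) / n

/-- `M` is `([a, a'], β)`-accurate on input `(b,v)`. -/
def accurate {n : ℕ} (M : Mech n) (a a' β : ℝ) (b : Fin n → Bool) (v : Fin n → ℝ) : Prop :=
  ((M.out b v).toOuterMeasure
      {s : ℤ | ¬((bbar b - a) * n < (s : ℝ) ∧ (s : ℝ) < (bbar b + a') * n)}).toReal ≤ β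

/-- `G` is the symmetric geometric distribution `Geom(ε)` on `ℤ`, with
`Pr[X = k] = (1-e^{-ε})/(1+e^{-ε}) · e^{-ε|k|}`. -/
def isGeom (ε : ℝ) (G : PMF ℤ) : Prop :=
  ∀ k : ℤ, G k =
    ENNReal.ofReal ((1 - Real.exp (-ε)) / (1 + Real.exp (-ε)) * Real.exp (-ε * |(k : ℝ)|))

/-- The monotonic-valuations mechanism `M_{B,ε}` (Algorithm 1): data bits of players with
`2εv_i > B/n` are treated as 0, the output is the resulting sum plus `Geom(ε)` noise, and
each player with `2εv_i ≤ B/n` is paid `B/n` (others are paid nothing). -/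
def monMech (n : ℕ) (B ε : ℝ) (G : PMF ℤ) : Mech n where
  run b v := G.map (fun x =>
    ((∑ i, if b i = true ∧ 2 * ε * v i ≤ B / n then (1 : ℤ) else 0) + x,
      fun i => if 2 * ε * v i ≤ B / n then B / n else 0))

/-- The modified mechanism `M'` of Theorem 4.3: identical to `M_{B,ε}` except that all
players with data bit 0 are paid `B/n`, even those with large privacy valuations. -/
def monMech' (n : ℕ) (B ε : ℝ) (G : PMF ℤ) : Mech n where
  run b v := G.map (fun x =>
    ((∑ i, if b i = true ∧ 2 * ε * v i ≤ B / n then (1 : ℤ) else 0) + x,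
      fun i => if 2 * ε * v i ≤ B / n ∨ b i = false then B / n else 0))

/-- The log-ratio of point probabilities of `M_{-i}` between `(b,v)` and the input where
player `i`'s type is replaced by `(b''_i, v''_i)`. -/
def logRatio {n : ℕ} (M : Mech n) (i : Fin n) (b : Fin n → Bool) (v : Fin n → ℝ)
    (b''i : Bool) (v''i : ℝ) (s : ℤ) (p : {j : Fin n // j ≠ i} → ℝ) : ℝ :=
  Real.log ((M.minus i b v (s, p)).toReal /
    (M.minus i (Function.update b i b''i) (Function.update v i v''i) (s, p)).toReal)

/-- `λ_i` is bounded by differential privacy for monotonic valuations. -/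
def boundedByDPMon {n : ℕ} (M : Mech n) {i : Fin n} (lam : LossFn n i) : Prop :=
  ∀ b v v'i s p,
    |lam b v v'i s p| ≤
      v i * ⨆ t : {t : Bool × ℝ // monRelated (b i, v i) t},
        logRatio M i b v t.1.1 t.1.2 s p

/-- `λ_i` respects identical output distributions. -/
def respectsIdentical {n : ℕ} (M : Mech n) {i : Fin n} (lam : LossFn n i) : Prop :=
  ∀ b v v'i, M.minus i b v = M.minus i b (Function.update v i v'i) →
    ∀ s p, lam b v v'i s p = lam b v (v i) s p

/-- `λ_i` is growing with statistical distance for monotonic neighbors. -/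
def growingMon {n : ℕ} (M : Mech n) {i : Fin n} (lam : LossFn n i) : Prop :=
  ∀ b v y, monINeighbor i (b, v) y →
    v i * tvDist (M.out b v) (M.out y.1 y.2) ≤ lossOf M lam b v (v i)

private lemma monMech_minus_apply (n : ℕ) (B ε : ℝ) (G : PMF ℤ) (i : Fin n)
    (b : Fin n → Bool) (v : Fin n → ℝ) (s : ℤ) (p : {j : Fin n // j ≠ i} → ℝ) :
    (monMech n B ε G).minus i b v (s, p) =
      if p = (fun j : {j : Fin n // j ≠ i} =>
          if 2 * ε * v j.1 ≤ B / n then B / n else 0)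
      then G (s - ∑ j, if b j = true ∧ 2 * ε * v j ≤ B / n then (1 : ℤ) else 0) else 0 := by
  classical
  set S : ℤ := ∑ j, if b j = true ∧ 2 * ε * v j ≤ B / n then (1 : ℤ) else 0 with hS
  set P : {j : Fin n // j ≠ i} → ℝ :=
    fun j => if 2 * ε * v j.1 ≤ B / n then B / n else 0 with hP
  have hmap : (monMech n B ε G).minus i b v =
      G.map (fun x : ℤ => (S + x, P)) := by
    simp only [Mech.minus, monMech, PMF.map_comp]
    rfl
  rw [hmap, PMF.map_apply]
  by_cases hp : p = P
  · rw [if_pos hp]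
    rw [tsum_eq_single (s - S) (fun x hx => by
      rw [if_neg]
      intro hc
      rw [Prod.mk.injEq] at hc
      obtain ⟨h1, -⟩ := hc
      exact hx (by omega))]
    rw [if_pos (by rw [hp, Prod.mk.injEq]; exact ⟨by omega, rfl⟩)]
  · rw [if_neg hp]
    refine (Summable.tsum_eq_zero_iff ENNReal.summable).mpr fun x => ?_
    rw [if_neg]
    intro hc
    rw [Prod.ext_iff] at hc
    exact hp hc.2

private lemma geom_ratio {ε : ℝ} (hε : 0 < ε) (G : PMF ℤ) (hG : isGeom ε G)
    {k k' : ℤ} (h : |k - k'| ≤ 1) :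
    G k ≤ ENNReal.ofReal (Real.exp ε) * G k' := by
  rw [hG k, hG k', ← ENNReal.ofReal_mul (Real.exp_nonneg ε)]
  apply ENNReal.ofReal_le_ofReal
  set c : ℝ := (1 - Real.exp (-ε)) / (1 + Real.exp (-ε)) with hc
  have hc0 : 0 ≤ c := by
    apply div_nonneg
    · have : Real.exp (-ε) ≤ 1 := Real.exp_le_one_iff.mpr (by linarith)
      linarith
    · positivity
  have hR : |(k : ℝ) - (k' : ℝ)| ≤ 1 := by exact_mod_cast h
  have habs : |(k' : ℝ)| ≤ |(k : ℝ)| + 1 := by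
    have h1 := abs_sub_abs_le_abs_sub (k' : ℝ) (k : ℝ)
    rw [abs_sub_comm] at h1
    linarith
  have hexp : -ε * |(k : ℝ)| ≤ ε + -ε * |(k' : ℝ)| := by nlinarith
  calc c * Real.exp (-ε * |(k : ℝ)|)
      ≤ c * Real.exp (ε + -ε * |(k' : ℝ)|) :=
        mul_le_mul_of_nonneg_left (Real.exp_le_exp.mpr hexp) hc0
    _ = Real.exp ε * (c * Real.exp (-ε * |(k' : ℝ)|)) := by rw [Real.exp_add]; ring

/-- **Differential privacy of the monotonic-valuations mechanism**
(used in the proof of Theorem 4.2): `M_{-i}` is `ε`-differentially private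
for `i`-neighbors. -/
theorem monMech_minus_dp (n : ℕ) (hn : 1 ≤ n) (B ε : ℝ) (hB : 0 < B) (hε : 0 < ε)
    (G : PMF ℤ) (hG : isGeom ε G) (i : Fin n)
    (x y : (Fin n → Bool) × (Fin n → ℝ)) (hxy : iNeighbor i x y)
    (sp : ℤ × ({j : Fin n // j ≠ i} → ℝ)) :
    (monMech n B ε G).minus i x.1 x.2 sp ≤
      ENNReal.ofReal (Real.exp ε) * (monMech n B ε G).minus i y.1 y.2 sp := by
  classical
  obtain ⟨s, p⟩ := sp
  rw [monMech_minus_apply, monMech_minus_apply]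
  have hPeq : (fun j : {j : Fin n // j ≠ i} =>
      if 2 * ε * x.2 j.1 ≤ B / n then B / n else 0) =
      (fun j : {j : Fin n // j ≠ i} =>
      if 2 * ε * y.2 j.1 ≤ B / n then B / n else 0) := by
    funext j
    rw [(hxy j.1 j.2).2]
  rw [← hPeq]
  by_cases hp : p = (fun j : {j : Fin n // j ≠ i} =>
      if 2 * ε * x.2 j.1 ≤ B / n then B / n else 0)
  · rw [if_pos hp, if_pos hp]
    apply geom_ratio hε G hG
    set f : Bool → ℝ → ℤ := fun bi vi => if bi = true ∧ 2 * ε * vi ≤ B / n then (1 : ℤ) else 0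
      with hf
    have hsum : ∀ (b : Fin n → Bool) (v : Fin n → ℝ),
        (∑ j, if b j = true ∧ 2 * ε * v j ≤ B / n then (1 : ℤ) else 0) =
        f (b i) (v i) + ∑ j ∈ Finset.univ.erase i, f (b j) (v j) := by
      intro b v
      exact (Finset.add_sum_erase Finset.univ (fun j => f (b j) (v j))
        (Finset.mem_univ i)).symm
    rw [hsum, hsum]
    have herase : (∑ j ∈ Finset.univ.erase i, f (x.1 j) (x.2 j)) =
        ∑ j ∈ Finset.univ.erase i, f (y.1 j) (y.2 j) := by
      refine Finset.sum_congr rfl fun j hj => ?_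
      have hji : j ≠ i := (Finset.mem_erase.mp hj).1
      rw [(hxy j hji).1, (hxy j hji).2]
    rw [herase]
    have h1 : f (x.1 i) (x.2 i) = 0 ∨ f (x.1 i) (x.2 i) = 1 := by
      by_cases h : x.1 i = true ∧ 2 * ε * x.2 i ≤ B / n <;> simp [hf, h]
    have h2 : f (y.1 i) (y.2 i) = 0 ∨ f (y.1 i) (y.2 i) = 1 := by
      by_cases h : y.1 i = true ∧ 2 * ε * y.2 i ≤ B / n <;> simp [hf, h]
    rw [abs_le]
    omega
  · rw [if_neg hp, if_neg hp]
    simp
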